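/- arXiv:1405.5254 — 6 statements merged into one kernel-verified Lean document; each statement's English description precedes it below -/
import Mathlib

section
/- For a CPTP map E with Kraus operators {E_i} spanning the operator space E, and operator subspaces S ⊆ L(A) and T ⊆ L(B), the condition E S E† ⊆ T is equivalent to E† T^⊥ E ⊆ S^⊥, where ⊥ denotes the orthogonal complement under the Hilbert–Schmidt inner product. -/
open Matrix
open scoped Kronecker
open scoped ComplexOrder

noncomputable section

variable {α β : Type*}

/-- The orthogonal complement of a space of operators with respect to the
Hilbert–Schmidt inner product `⟨X, Y⟩ = Tr (Xᴴ * Y)`. -/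
def hsOrtho [Fintype α] (S : Submodule ℂ (Matrix α α ℂ)) : Submodule ℂ (Matrix α α ℂ) where
  carrier := {X | ∀ s ∈ S, (sᴴ * X).trace = 0}
  add_mem' := by
    intro a b ha hb s hs
    simp [Matrix.mul_add, ha s hs, hb s hs]
  zero_mem' := by intro s hs; simp
  smul_mem' := by
    intro c a ha s hs
    simp [Matrix.mul_smul, ha s hs]

/-- A homomorphism of non-commutative graphs `S → T`: a completely positive trace
preserving map, given by Kraus operators `E i` (so `∑ i, (E i)ᴴ * E i = 1`), such that
`E S Eᴴ ⊆ T`. -/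
def OpHom [Fintype α] [Fintype β] [DecidableEq α]
    (S : Submodule ℂ (Matrix α α ℂ)) (T : Submodule ℂ (Matrix β β ℂ)) : Prop :=
  ∃ k : ℕ, ∃ E : Fin k → Matrix β α ℂ,
    (∑ i, (E i)ᴴ * E i) = 1 ∧ ∀ i j, ∀ s ∈ S, E i * s * (E j)ᴴ ∈ T

/-- The quantum complete graph `Q_n`: trace-free operators on `ℂ^n`. -/
def Qgraph (d : ℕ) : Submodule ℂ (Matrix (Fin d) (Fin d) ℂ) :=
  LinearMap.ker (Matrix.traceLinearMap (Fin d) ℂ ℂ)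

/-- The classical complete graph `K_n`: matrices with zero diagonal. -/
def Kgraph (d : ℕ) : Submodule ℂ (Matrix (Fin d) (Fin d) ℂ) where
  carrier := {X | ∀ i, X i i = 0}
  add_mem' := by intro a b ha hb i; simp [ha i, hb i]
  zero_mem' := by intro i; simp
  smul_mem' := by intro c a ha i; simp [ha i]

/-- The operator space derived from a classical graph: `span { |x⟩⟨y| : x ~ y }`. -/
def graphSubmodule [Fintype α] [DecidableEq α] (G : SimpleGraph α) :
    Submodule ℂ (Matrix α α ℂ) :=
  Submodule.span ℂ {A | ∃ x y, G.Adj x y ∧ A = Matrix.single x y 1}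

/-- The span of `s ⊗ t` for `s ∈ S`, `t ∈ T` (tensor of operator spaces, realized
via the Kronecker product). -/
def tensorSub [Fintype α] [Fintype β] (S : Submodule ℂ (Matrix α α ℂ))
    (T : Submodule ℂ (Matrix β β ℂ)) : Submodule ℂ (Matrix (α × β) (α × β) ℂ) :=
  Submodule.span ℂ {X | ∃ s ∈ S, ∃ t ∈ T, X = s ⊗ₖ t}

/-- The span of `s ⊗ Λ` for `s ∈ S` and a fixed operator `Λ`. -/
def tensorOp [Fintype α] [Fintype β] (S : Submodule ℂ (Matrix α α ℂ))
    (Λ : Matrix β β ℂ) : Submodule ℂ (Matrix (α × β) (α × β) ℂ) :=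
  Submodule.span ℂ {X | ∃ s ∈ S, X = s ⊗ₖ Λ}

end

section Aux

variable {γ : Type*} [Fintype γ]

/-- Matrices as Euclidean space, to access Mathlib's orthogonality machinery. -/
noncomputable def matEuc : Matrix γ γ ℂ ≃ₗ[ℂ] EuclideanSpace ℂ (γ × γ) where
  toFun X := WithLp.toLp 2 (fun p : γ × γ => X p.1 p.2)
  invFun v := Matrix.of fun i j => v (i, j)
  map_add' := by intros; rfl
  map_smul' := by intros; rfl
  left_inv := by intro X; rfl
  right_inv := by intro v; rfl

lemma inner_matEuc (X Y : Matrix γ γ ℂ) :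
    (inner ℂ (matEuc X) (matEuc Y) : ℂ) = (Xᴴ * Y).trace := by
  simp only [EuclideanSpace.inner_eq_star_dotProduct]
  simp [Matrix.trace, Matrix.mul_apply, Matrix.diag, dotProduct,
    Fintype.sum_prod_type, matEuc, Matrix.conjTranspose_apply, mul_comm]
  rw [Finset.sum_comm]
  rfl

lemma mem_hsOrtho_iff (T : Submodule ℂ (Matrix γ γ ℂ)) (X : Matrix γ γ ℂ) :
    X ∈ hsOrtho T ↔ matEuc X ∈ (T.map (matEuc : Matrix γ γ ℂ ≃ₗ[ℂ] _).toLinearMap)ᗮ := by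
  constructor
  · intro h v hv
    rcases hv with ⟨t, ht, rfl⟩
    show (inner ℂ (matEuc t) (matEuc X) : ℂ) = 0
    rw [inner_matEuc]
    exact h t ht
  · intro h t ht
    rw [← inner_matEuc]
    exact h (matEuc t) ⟨t, ht, rfl⟩

lemma map_hsOrtho (T : Submodule ℂ (Matrix γ γ ℂ)) :
    (hsOrtho T).map (matEuc : Matrix γ γ ℂ ≃ₗ[ℂ] _).toLinearMap
      = (T.map (matEuc : Matrix γ γ ℂ ≃ₗ[ℂ] _).toLinearMap)ᗮ := by
  ext v
  constructor
  · rintro ⟨X, hX, rfl⟩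
    exact (mem_hsOrtho_iff T X).1 hX
  · intro hv
    refine ⟨matEuc.symm v, (mem_hsOrtho_iff T _).2 ?_, by simp⟩
    simpa using hv

lemma hsOrtho_hsOrtho (T : Submodule ℂ (Matrix γ γ ℂ)) :
    hsOrtho (hsOrtho T) = T := by
  have h1 := map_hsOrtho (hsOrtho T)
  rw [map_hsOrtho T, Submodule.orthogonal_orthogonal] at h1
  exact Submodule.map_injective_of_injective (matEuc : Matrix γ γ ℂ ≃ₗ[ℂ] _).injective h1

lemma trace_key {α β : Type*} [Fintype α] [Fintype β]
    (A B : Matrix β α ℂ) (s : Matrix α α ℂ) (t : Matrix β β ℂ) :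
    (sᴴ * (Aᴴ * t * B)).trace = ((A * s * Bᴴ)ᴴ * t).trace := by
  have h : (A * s * Bᴴ)ᴴ * t = B * (sᴴ * (Aᴴ * t)) := by
    simp [Matrix.conjTranspose_mul, Matrix.mul_assoc]
  rw [h, Matrix.trace_mul_comm B (sᴴ * ((Aᴴ : Matrix α β ℂ) * t))]
  simp only [Matrix.mul_assoc]

end Aux

/-- For a CPTP map with Kraus operators `E i` and Hermitian-closed operator subspaces
`S ⊆ L(A)`, `T ⊆ L(B)`, the condition `E S Eᴴ ⊆ T` is equivalent to
`Eᴴ T^⊥ E ⊆ S^⊥`, where `⊥` is the Hilbert–Schmidt orthogonal complement. -/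
theorem ESE_subset_iff_ETperpE {α β : Type*} [Fintype α] [Fintype β] [DecidableEq α]
    [DecidableEq β]
    (S : Submodule ℂ (Matrix α α ℂ)) (T : Submodule ℂ (Matrix β β ℂ))
    (hS : ∀ s ∈ S, sᴴ ∈ S) (hT : ∀ t ∈ T, tᴴ ∈ T)
    (k : ℕ) (E : Fin k → Matrix β α ℂ) (hE : (∑ i, (E i)ᴴ * E i) = 1) :
    (∀ i j, ∀ s ∈ S, E i * s * (E j)ᴴ ∈ T) ↔
      (∀ i j, ∀ t ∈ hsOrtho T, (E i)ᴴ * t * E j ∈ hsOrtho S) := by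
  constructor
  · intro h i j t ht s hs
    rw [trace_key]
    exact ht _ (h i j s hs)
  · intro h i j s hs
    rw [← hsOrtho_hsOrtho T]
    intro t ht
    have h1 : (sᴴ * ((E i)ᴴ * t * E j)).trace = 0 := h i j t ht s hs
    rw [trace_key] at h1
    calc (tᴴ * (E i * s * (E j)ᴴ)).trace
        = star (((E i * s * (E j)ᴴ)ᴴ * t).trace) := by
          rw [← Matrix.trace_conjTranspose]
          simp [Matrix.conjTranspose_mul]
      _ = 0 := by rw [h1]; simp
end

section
/- Let S ⊆ L(C^m) and T ⊆ L(C^n) be the operator spaces derived from loop-free graphs G and H via S = span{|x⟩⟨y| : x ~_G y} and T = span{|x⟩⟨y| : x ~_H y}. Then G is homomorphic to H (as classical graphs) if and only if there exists a CPTP map with Kraus operators {E_i}, spanning subspace E, such that E S E† ⊆ T. -/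
open Matrix
open scoped Kronecker
open scoped ComplexOrder

lemma graphSubmodule_entry_zero {n : ℕ} {H : SimpleGraph (Fin n)}
    {X : Matrix (Fin n) (Fin n) ℂ} (hX : X ∈ graphSubmodule H)
    {x y : Fin n} (hxy : ¬ H.Adj x y) : X x y = 0 := by
  induction hX using Submodule.span_induction with
  | mem A hA =>
    obtain ⟨a, b, hab, rfl⟩ := hA
    rw [Matrix.single]
    by_cases h : a = x ∧ b = y
    · exact absurd (h.1 ▸ h.2 ▸ hab) hxy
    · simp [Matrix.of_apply, h]
  | zero => simp
  | add A B _ _ hA hB => simp [hA, hB]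
  | smul c A _ hA => simp [hA]

lemma stdBasis_mem_graphSubmodule {n : ℕ} {H : SimpleGraph (Fin n)}
    {x y : Fin n} (h : H.Adj x y) :
    Matrix.single x y (1 : ℂ) ∈ graphSubmodule H :=
  Submodule.subset_span ⟨x, y, h, rfl⟩

lemma stdBasisMatrix_conjT {p q : Type*} [DecidableEq p] [DecidableEq q]
    (i : p) (j : q) (c : ℂ) :
    (Matrix.single i j c)ᴴ = Matrix.single j i (star c) := by
  ext a b
  simp only [Matrix.conjTranspose_apply, Matrix.single, Matrix.of_apply]
  by_cases h1 : i = b <;> by_cases h2 : j = a <;> simp [h1, h2]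

lemma stdBasisMatrix_mul_stdBasisMatrix {p q r : Type*} [Fintype q]
    [DecidableEq p] [DecidableEq q] [DecidableEq r]
    (i : p) (j j' : q) (k : r) (c d : ℂ) :
    Matrix.single i j c * Matrix.single j' k d
      = if j = j' then Matrix.single i k (c * d) else 0 := by
  ext a b
  rw [Matrix.mul_apply]
  by_cases hj : j = j'
  · subst hj
    simp only [if_pos rfl]
    rw [Finset.sum_eq_single j]
    · by_cases h1 : i = a <;> by_cases h2 : k = b <;>
        simp [Matrix.single, h1, h2]
    · intro x _ hx
      simp [Matrix.single, Ne.symm hx]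
    · simp
  · simp only [if_neg hj, Matrix.zero_apply]
    apply Finset.sum_eq_zero
    intro x _
    rcases eq_or_ne j x with rfl | hjx
    · rw [Matrix.single_apply_of_row_ne (Ne.symm hj), mul_zero]
    · rw [Matrix.single_apply_of_col_ne _ _ hjx, zero_mul]

lemma sum_stdBasisMatrix_diag {p : Type*} [Fintype p] [DecidableEq p] :
    (∑ i : p, Matrix.single i i (1 : ℂ)) = 1 := by
  ext a b
  rw [Matrix.sum_apply]
  by_cases h : a = b
  · subst h
    rw [Finset.sum_eq_single a]
    · simp
    · intro x _ hx; simp [Matrix.single, hx]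
    · simp
  · rw [Matrix.one_apply_ne h]
    apply Finset.sum_eq_zero
    intro x _
    by_cases hx : x = a
    · subst hx; simp [Matrix.single, h]
    · simp [Matrix.single, hx]

/-- For loop-free classical graphs `G`, `H` with derived operator spaces
`S = span{|x⟩⟨y| : x ~_G y}` and `T = span{|x⟩⟨y| : x ~_H y}`, there is a classical graph
homomorphism `G → H` iff there is a CPTP map whose Kraus span `E` satisfies
`E S Eᴴ ⊆ T`. -/
theorem classical_hom_iff_opHom {m n : ℕ} (G : SimpleGraph (Fin m)) (H : SimpleGraph (Fin n)) :
    Nonempty (G →g H) ↔ OpHom (graphSubmodule G) (graphSubmodule H) := by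
  constructor
  · rintro ⟨f⟩
    refine ⟨m, fun x => Matrix.single (f x) x (1:ℂ), ?_, ?_⟩
    · have h1 : ∀ x : Fin m, (Matrix.single (f x) x (1:ℂ))ᴴ * Matrix.single (f x) x (1:ℂ)
          = Matrix.single x x (1:ℂ) := by
        intro x
        rw [stdBasisMatrix_conjT, stdBasisMatrix_mul_stdBasisMatrix, if_pos rfl, star_one, one_mul]
      simp only [h1]
      exact sum_stdBasisMatrix_diag
    · intro i j s hs
      induction hs using Submodule.span_induction with
      | mem A hA =>
        obtain ⟨a, b, hab, rfl⟩ := hA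
        rw [stdBasisMatrix_conjT, stdBasisMatrix_mul_stdBasisMatrix]
        by_cases hia : i = a
        · subst hia
          rw [if_pos rfl, one_mul, stdBasisMatrix_mul_stdBasisMatrix]
          by_cases hjb : b = j
          · subst hjb
            rw [if_pos rfl, star_one, mul_one]
            exact stdBasis_mem_graphSubmodule (f.map_adj hab)
          · rw [if_neg hjb]; exact Submodule.zero_mem _
        · rw [if_neg hia, Matrix.zero_mul]; exact Submodule.zero_mem _
      | zero =>
        rw [Matrix.mul_zero, Matrix.zero_mul]; exact Submodule.zero_mem _
      | add A B _ _ hA hB =>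
        rw [Matrix.mul_add, Matrix.add_mul]; exact Submodule.add_mem _ hA hB
      | smul c A _ hA =>
        rw [Matrix.mul_smul, Matrix.smul_mul]; exact Submodule.smul_mem _ c hA
  · rintro ⟨k, E, hE, hT⟩
    have key : ∀ a : Fin m, ∃ i x, E i x a ≠ 0 := by
      intro a
      by_contra h
      push_neg at h
      have h1 : (∑ i, (E i)ᴴ * E i) a a = (1 : Matrix (Fin m) (Fin m) ℂ) a a :=
        congrFun (congrFun hE a) a
      rw [Matrix.one_apply_eq] at h1
      simp only [Matrix.sum_apply, Matrix.mul_apply, Matrix.conjTranspose_apply] at h1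
      have hz : ∀ i ∈ (Finset.univ : Finset (Fin k)),
          ∑ x, star (E i x a) * E i x a = 0 := by
        intro i _
        apply Finset.sum_eq_zero
        intro x _
        rw [h i x]
        simp
      rw [Finset.sum_eq_zero hz] at h1
      exact one_ne_zero h1.symm
    choose I F hIF using key
    refine ⟨⟨F, ?_⟩⟩
    intro a b hab
    have hmem := hT (I a) (I b) _ (stdBasis_mem_graphSubmodule hab)
    by_contra hadj
    have hz := graphSubmodule_entry_zero hmem (x := F a) (y := F b) hadj
    have hentry : (E (I a) * Matrix.single a b (1:ℂ) * (E (I b))ᴴ) (F a) (F b)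
        = E (I a) (F a) a * star (E (I b) (F b) b) := by
      rw [Matrix.mul_apply]
      rw [Finset.sum_eq_single b]
      · rw [Matrix.conjTranspose_apply, Matrix.mul_apply, Finset.sum_eq_single a]
        · simp
        · intro c _ hc; simp [Matrix.single, Ne.symm hc]
        · simp
      · intro c _ hc
        rw [Matrix.mul_apply]
        have : ∀ x ∈ (Finset.univ : Finset (Fin m)),
            E (I a) (F a) x * Matrix.single a b (1:ℂ) x c = 0 := by
          intro x _
          simp [Matrix.single, Ne.symm hc]
        rw [Finset.sum_eq_zero this, zero_mul]
      · simp
    rw [hentry] at hz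
    rcases mul_eq_zero.mp hz with h | h
    · exact hIF a h
    · exact hIF b (by simpa using h)
end

section
/- Let S be the operator space derived from a loop-free classical graph G via S = span{|x⟩⟨y| : x ~ y}. Then the least n such that there exists a CPTP map with Kraus span E satisfying E S E† ⊆ Q_n (the trace-free operators on C^n) equals the orthogonal rank ξ(G) of G. -/
open Matrix
open scoped Kronecker
open scoped ComplexOrder

noncomputable section Aux
open Matrix

private lemma trace_mul_std' {d m : ℕ} (A B : Matrix (Fin d) (Fin m) ℂ) (x y : Fin m) :
    (A * Matrix.single x y (1:ℂ) * Bᴴ).trace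
      = ∑ a, A a x * (starRingEnd ℂ) (B a y) := by
  simp [Matrix.trace, Matrix.mul_apply, Matrix.single, Matrix.diag,
    conjTranspose_apply, Finset.mul_sum, ite_and]

private lemma inner_eq_sum' {d : ℕ} (u v : EuclideanSpace ℂ (Fin d)) :
    (inner ℂ u v : ℂ) = ∑ a, (starRingEnd ℂ) (u a) * v a := by
  simp [PiLp.inner_apply, RCLike.inner_apply, mul_comm]

private lemma dirA {m d : ℕ} (G : SimpleGraph (Fin m)) (k : ℕ)
    (E : Fin k → Matrix (Fin d) (Fin m) ℂ)
    (hE : (∑ i, (E i)ᴴ * E i) = 1)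
    (hmem : ∀ i j, ∀ s ∈ graphSubmodule G, E i * s * (E j)ᴴ ∈ Qgraph d) :
    ∃ ψ : Fin m → EuclideanSpace ℂ (Fin d),
      (∀ x, ψ x ≠ 0) ∧ ∀ x y, G.Adj x y → inner ℂ (ψ x) (ψ y) = (0 : ℂ) := by
  have hcol : ∀ x : Fin m, ∃ i a, E i a x ≠ 0 := by
    intro x
    by_contra h
    push_neg at h
    have h1 := congrFun (congrFun hE x) x
    simp [Matrix.sum_apply, Matrix.mul_apply, conjTranspose_apply, h, Matrix.one_apply] at h1
  choose i a hia using hcol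
  refine ⟨fun x => (WithLp.toLp 2 (fun b => E (i x) b x) : EuclideanSpace ℂ (Fin d)), ?_, ?_⟩
  · intro x hx
    exact hia x (by simpa using congrArg (fun v : EuclideanSpace ℂ (Fin d) => v (a x)) hx)
  · intro x y hxy
    have hQ := hmem (i x) (i y) _ (Submodule.subset_span ⟨x, y, hxy, rfl⟩)
    rw [Qgraph, LinearMap.mem_ker, Matrix.traceLinearMap_apply, trace_mul_std'] at hQ
    have := congrArg (starRingEnd ℂ) hQ
    rw [inner_eq_sum']
    simpa [map_sum, mul_comm] using this

private lemma dirB {m d : ℕ} (G : SimpleGraph (Fin m))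
    (ψ : Fin m → EuclideanSpace ℂ (Fin d)) (hne : ∀ x, ψ x ≠ 0)
    (horth : ∀ x y, G.Adj x y → inner ℂ (ψ x) (ψ y) = (0 : ℂ)) :
    ∃ k : ℕ, ∃ E : Fin k → Matrix (Fin d) (Fin m) ℂ,
      (∑ i, (E i)ᴴ * E i) = 1 ∧
      ∀ i j, ∀ s ∈ graphSubmodule G, E i * s * (E j)ᴴ ∈ Qgraph d := by
  set φ : Fin m → EuclideanSpace ℂ (Fin d) := fun x => (‖ψ x‖ : ℂ)⁻¹ • ψ x with hφdef
  have hφself : ∀ x, (inner ℂ (φ x) (φ x) : ℂ) = 1 := by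
    intro x
    have hn : (‖ψ x‖ : ℂ) ≠ 0 := by
      simpa using norm_ne_zero_iff.mpr (hne x)
    have h1 : ‖φ x‖ = 1 := by
      rw [hφdef]
      simp only [norm_smul, norm_inv, Complex.norm_real, norm_norm]
      field_simp
      exact div_self (norm_ne_zero_iff.mpr (hne x))
    rw [inner_self_eq_norm_sq_to_K, h1]
    norm_num
  have hφorth : ∀ x y, G.Adj x y → (inner ℂ (φ x) (φ y) : ℂ) = 0 := by
    intro x y hxy
    rw [hφdef]
    simp [inner_smul_left, inner_smul_right, horth x y hxy]
  refine ⟨m, fun x => Matrix.of (fun a b => if b = x then φ x a else 0), ?_, ?_⟩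
  · ext b c
    simp only [Matrix.sum_apply, Matrix.mul_apply, conjTranspose_apply, Matrix.of_apply,
      Matrix.one_apply]
    have key : ∀ x : Fin m,
        (∑ a, star (if b = x then φ x a else 0) * (if c = x then φ x a else 0))
        = if b = x ∧ c = x then 1 else 0 := by
      intro x
      by_cases hb : b = x <;> by_cases hc : c = x <;>
        simp [hb, hc]
      have := hφself x
      rw [inner_eq_sum'] at this
      simpa using this
    rw [Finset.sum_congr rfl (fun x _ => key x)]
    by_cases hbc : b = c
    · subst hbc
      simp
    · simp [hbc, fun x => show ¬(b = x ∧ c = x) from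
        fun ⟨h1, h2⟩ => hbc (h1.trans h2.symm)]
  · intro i j
    set Ei : Matrix (Fin d) (Fin m) ℂ := Matrix.of (fun a b => if b = i then φ i a else 0)
    set Ej : Matrix (Fin d) (Fin m) ℂ := Matrix.of (fun a b => if b = j then φ j a else 0)
    let L : Matrix (Fin m) (Fin m) ℂ →ₗ[ℂ] Matrix (Fin d) (Fin d) ℂ :=
      { toFun := fun s => Ei * s * Ejᴴ
        map_add' := by intro u v; simp [Matrix.mul_add, Matrix.add_mul]
        map_smul' := by intro c u; simp [Matrix.mul_smul, Matrix.smul_mul] }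
    have hle : graphSubmodule G ≤ (Qgraph d).comap L := by
      rw [graphSubmodule, Submodule.span_le]
      rintro _ ⟨x, y, hxy, rfl⟩
      simp only [Submodule.mem_comap, Qgraph, LinearMap.mem_ker, Matrix.traceLinearMap_apply,
        SetLike.mem_coe, LinearMap.coe_mk, AddHom.coe_mk, L]
      rw [trace_mul_std']
      by_cases hx : i = x
      · by_cases hy : j = y
        · subst hx; subst hy
          have := hφorth i j hxy
          rw [inner_eq_sum'] at this
          have h2 := congrArg (starRingEnd ℂ) this
          simp only [map_sum, _root_.map_mul, RingHomCompTriple.comp_apply, map_zero,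
            RingHom.id_apply, starRingEnd_self_apply] at h2
          simpa [Ei, Ej, mul_comm] using h2
        · have hy' : ¬ y = j := fun h => hy h.symm
          simp [Ei, Ej, hy']
      · have hx' : ¬ x = i := fun h => hx h.symm
        simp [Ei, Ej, hx']
    exact fun s hs => hle hs

end Aux

/-- For the operator space `S` derived from a loop-free classical graph `G`, the least `n`
such that there is a CPTP map with Kraus span `E` satisfying `E S Eᴴ ⊆ Q_n` equals the
orthogonal rank `ξ(G)`. -/
theorem opHom_to_Q_eq_orthRank {m : ℕ} (G : SimpleGraph (Fin m)) :
    sInf {d : ℕ | OpHom (graphSubmodule G) (Qgraph d)} =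
    sInf {d : ℕ | ∃ ψ : Fin m → EuclideanSpace ℂ (Fin d),
      (∀ x, ψ x ≠ 0) ∧ ∀ x y, G.Adj x y → inner ℂ (ψ x) (ψ y) = (0 : ℂ)} := by
  congr 1
  ext d
  simp only [Set.mem_setOf_eq, OpHom]
  constructor
  · rintro ⟨k, E, hE, hmem⟩
    exact dirA G k E hE hmem
  · rintro ⟨ψ, hne, horth⟩
    exact dirB G ψ hne horth
end

section
/- Let S be the operator space derived from a loop-free classical graph G. Then there is no homomorphism from Q_n to S for any n > 1; that is, the quantum clique number of S equals 1. -/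
open Matrix
open scoped Kronecker
open scoped ComplexOrder

lemma graph_diag' {m : ℕ} (G : SimpleGraph (Fin m)) {A : Matrix (Fin m) (Fin m) ℂ}
    (hA : A ∈ graphSubmodule G) (x : Fin m) : A x x = 0 := by
  induction hA using Submodule.span_induction with
  | mem A h =>
    obtain ⟨a, b, hab, rfl⟩ := h
    simp only [Matrix.single, Matrix.of_apply, ite_eq_right_iff, one_ne_zero]
    rintro ⟨h1, h2⟩
    exact G.ne_of_adj hab (h1.trans h2.symm)
  | zero => simp
  | add A B _ _ hA hB => simp [hA, hB]
  | smul c A _ hA => simp [hA]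

/-- For the operator space `S` derived from a loop-free classical graph `G`, there is no
homomorphism from `Q_n` to `S` for any `n > 1`; that is, the quantum clique number of `S`
equals `1`. -/
theorem no_opHom_Q_to_classical {m n : ℕ} (G : SimpleGraph (Fin m)) (hn : 1 < n) :
    ¬ OpHom (Qgraph n) (graphSubmodule G) := by
  rintro ⟨k, E, hsum, hmem⟩
  haveI : Nontrivial (Fin n) := Fin.nontrivial_iff_two_le.mpr hn
  have hE : ∀ i, E i = 0 := by
    intro i
    ext x a
    have key : ∀ s ∈ Qgraph n, ∑ c, (∑ b, E i x b * s b c) * star (E i x c) = 0 := by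
      intro s hs
      have := graph_diag' G (hmem i i s hs) x
      simpa [Matrix.mul_apply, Matrix.conjTranspose_apply] using this
    simp only [Matrix.zero_apply]
    by_contra hva
    obtain ⟨b, hb⟩ := exists_ne a
    have mem1 : Matrix.single a b (1:ℂ) ∈ Qgraph n := by
      rw [Qgraph, LinearMap.mem_ker, Matrix.traceLinearMap_apply,
        Matrix.trace_single_eq_of_ne _ _ _ hb.symm]
    have mem2 : Matrix.single a a (1:ℂ) - Matrix.single b b 1 ∈ Qgraph n := by
      simp [Qgraph, LinearMap.mem_ker, Matrix.trace_single_eq_same]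
    have h1 := key _ mem1
    have h2 := key _ mem2
    simp [Matrix.single, Matrix.of_apply, ite_and, Finset.sum_ite_eq,
      Finset.sum_ite_eq', mul_ite, ite_mul, mul_sub, sub_mul, Finset.sum_sub_distrib] at h1 h2
    rcases h1 with h | h
    · exact hva h
    · rw [h] at h2
      simp only [map_zero, mul_zero, sub_zero] at h2
      rcases mul_eq_zero.mp h2 with h' | h'
      · exact hva h'
      · exact hva (by simpa using h')
  simp only [hE, Matrix.conjTranspose_zero, Matrix.mul_zero, Finset.sum_const,
    smul_zero] at hsum
  exact zero_ne_one hsum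
end

section
/- Let S ⊆ L(A) be an operator space containing the identity. The largest number of nonzero vectors {ψ_i} with |ψ_i⟩⟨ψ_j| ∈ S^⊥ for all i ≠ j equals the largest n such that K_n (matrices with zero diagonal on C^n) is homomorphic to S^⊥ via a CPTP map. -/
open Matrix
open scoped Kronecker
open scoped ComplexOrder

/-- For an operator space `S ⊆ L(A)` containing the identity, the largest number of
nonzero vectors `ψ_i` with `|ψ_i⟩⟨ψ_j| ∈ S^⊥` for all `i ≠ j` equals the largest `n`
such that `K_n` is homomorphic to `S^⊥` via a CPTP map. -/
theorem indep_eq_Khom {α : Type*} [Fintype α] [DecidableEq α]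
    (S : Submodule ℂ (Matrix α α ℂ)) (hI : (1 : Matrix α α ℂ) ∈ S) :
    sSup {k : ℕ | ∃ ψ : Fin k → (α → ℂ), (∀ i, ψ i ≠ 0) ∧
        ∀ i j, i ≠ j → Matrix.vecMulVec (ψ i) (star (ψ j)) ∈ hsOrtho S} =
    sSup {k : ℕ | OpHom (Kgraph k) (hsOrtho S)} := by
  have hsets : {k : ℕ | ∃ ψ : Fin k → (α → ℂ), (∀ i, ψ i ≠ 0) ∧
        ∀ i j, i ≠ j → Matrix.vecMulVec (ψ i) (star (ψ j)) ∈ hsOrtho S} =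
      {k : ℕ | OpHom (Kgraph k) (hsOrtho S)} := by
    ext k
    constructor
    · rintro ⟨ψ, hψ, hortho⟩
      set r : Fin k → ℝ := fun i => ∑ a, Complex.normSq (ψ i a) with hr
      have hrpos : ∀ i, 0 < r i := by
        intro i
        obtain ⟨a, ha⟩ := Function.ne_iff.mp (hψ i)
        exact Finset.sum_pos' (fun x _ => Complex.normSq_nonneg _)
          ⟨a, Finset.mem_univ a, Complex.normSq_pos.mpr ha⟩
      set c : Fin k → ℝ := fun i => (Real.sqrt (r i))⁻¹ with hc
      have hkeyR : ∀ i, c i * c i * r i = 1 := by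
        intro i
        have h1 : Real.sqrt (r i) * Real.sqrt (r i) = r i :=
          Real.mul_self_sqrt (hrpos i).le
        have h2 : Real.sqrt (r i) ≠ 0 := Real.sqrt_ne_zero'.mpr (hrpos i)
        field_simp [hc]
        simp only [hc, inv_pow, Real.sq_sqrt (hrpos i).le]
        exact inv_mul_cancel₀ (hrpos i).ne'
      have hsum : ∀ i, (∑ a, (starRingEnd ℂ) (ψ i a) * ψ i a) = (r i : ℂ) := by
        intro i
        rw [hr]
        push_cast
        refine Finset.sum_congr rfl fun a _ => ?_
        rw [Complex.normSq_eq_conj_mul_self]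
      have hkey : ∀ i, (c i : ℂ) * c i * (∑ a, (starRingEnd ℂ) (ψ i a) * ψ i a) = 1 := by
        intro i
        rw [hsum i, ← Complex.ofReal_mul, ← Complex.ofReal_mul, hkeyR i,
          Complex.ofReal_one]
      refine ⟨k, fun i => Matrix.of fun a b => if b = i then (c i : ℂ) * ψ i a else 0,
        ?_, ?_⟩
      · ext b b'
        simp only [Matrix.sum_apply, Matrix.mul_apply, Matrix.conjTranspose_apply,
          Matrix.of_apply, apply_ite (star : ℂ → ℂ), star_zero, star_mul', ite_mul,
          zero_mul, mul_ite, mul_zero]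
        rw [Finset.sum_comm]
        by_cases hbb : b = b'
        · subst hbb
          rw [Matrix.one_apply_eq, ← hkey b, Finset.mul_sum]
          refine Finset.sum_congr rfl fun a _ => ?_
          rw [Finset.sum_ite_eq]
          simp only [Finset.mem_univ, if_true, Complex.star_def, Complex.conj_ofReal]
          ring
        · rw [Matrix.one_apply_ne hbb]
          refine Finset.sum_eq_zero fun a _ => Finset.sum_eq_zero fun i _ => ?_
          by_cases h1 : b = i <;> by_cases h2 : b' = i <;> simp_all
      · intro i j s hs
        have hmat : (Matrix.of fun a b => if b = i then (c i : ℂ) * ψ i a else 0) * s *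
            (Matrix.of fun a b => if b = j then (c j : ℂ) * ψ j a else 0)ᴴ =
            ((c i : ℂ) * (c j : ℂ) * s i j) • Matrix.vecMulVec (ψ i) (star (ψ j)) := by
          ext a a'
          simp only [Matrix.mul_apply, Matrix.conjTranspose_apply, Matrix.of_apply,
            apply_ite (star : ℂ → ℂ), star_zero, star_mul', ite_mul, zero_mul, mul_ite,
            mul_zero, Matrix.smul_apply, Matrix.vecMulVec_apply, Pi.star_apply,
            smul_eq_mul]
          simp only [Finset.sum_ite_eq', Finset.mem_univ, if_true]
          simp only [Complex.star_def, Complex.conj_ofReal]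
          ring
        rw [hmat]
        rcases eq_or_ne i j with hij | hij
        · subst hij
          rw [hs i]
          simp only [mul_zero, zero_smul]
          exact (hsOrtho S).zero_mem
        · exact Submodule.smul_mem _ _ (hortho i j hij)
    · rintro ⟨m, E, hE1, hET⟩
      have hex : ∀ j : Fin k, ∃ i a, E i a j ≠ 0 := by
        intro j
        by_contra h
        push_neg at h
        have := congrFun (congrFun hE1 j) j
        rw [Matrix.one_apply_eq] at this
        simp only [Matrix.sum_apply, Matrix.mul_apply, Matrix.conjTranspose_apply] at this
        simp [h] at this
      choose f g hg using hex
      refine ⟨fun j => fun a => E (f j) a j, fun j h0 => hg j (congrFun h0 (g j)), ?_⟩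
      intro i j hij
      have hK : Matrix.single i j (1 : ℂ) ∈ Kgraph k := by
        intro l
        simp only [Matrix.single, Matrix.of_apply]
        rcases eq_or_ne i l with h | h
        · subst h
          simp [Ne.symm hij]
        · simp [h]
      have hmat : Matrix.vecMulVec (fun a => E (f i) a i)
          (star fun a => E (f j) a j) =
          E (f i) * Matrix.single i j (1 : ℂ) * (E (f j))ᴴ := by
        ext a a'
        simp [Matrix.vecMulVec_apply, Matrix.mul_apply, Matrix.conjTranspose_apply,
          Matrix.single, ite_and, mul_comm]
      rw [hmat]
      exact hET (f i) (f j) _ hK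
  rw [hsets]
end

section
/- Let S ⊆ L(A) be an operator space with I ∈ S. The largest rank of a projector P with PSP = C·P equals the largest n such that Q_n is homomorphic to S^⊥ via a CPTP map. -/
open Matrix
open scoped Kronecker
open scoped ComplexOrder

section auxLemmas
open Matrix

lemma scalar_of_forall_traceless {k : ℕ} (M : Matrix (Fin k) (Fin k) ℂ)
    (h : ∀ q : Matrix (Fin k) (Fin k) ℂ, q.trace = 0 → (M * q).trace = 0) :
    ∃ c : ℂ, M = c • 1 := by
  rcases Nat.eq_zero_or_pos k with hk | hk
  · exact ⟨0, by subst hk; exact Subsingleton.elim _ _⟩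
  · have : NeZero k := ⟨hk.ne'⟩
    refine ⟨M 0 0, ?_⟩
    have key : ∀ a b : Fin k, (M * single b a 1).trace = M a b := by
      intro a b
      simp [Matrix.trace, Matrix.diag, Matrix.mul_apply, Matrix.single, ite_and,
        Finset.sum_ite_eq, Finset.sum_ite_eq']
    ext a b
    by_cases hab : a = b
    · subst hab
      have h2 := h (single a a 1 - single 0 0 1)
        (by simp [Matrix.trace_single_eq_same])
      rw [Matrix.mul_sub, Matrix.trace_sub, key, key, sub_eq_zero] at h2
      simp [h2, Matrix.one_apply]
    · have h2 := h (single b a 1) (by exact Matrix.trace_single_eq_of_ne b a 1 (Ne.symm hab))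
      rw [key] at h2
      simp [h2, Matrix.one_apply, hab]


lemma exists_isometry {n : Type*} [Fintype n] [DecidableEq n] {P : Matrix n n ℂ}
    (hP : P.IsHermitian) (hidem : P * P = P) :
    ∃ V : Matrix n (Fin P.rank) ℂ, Vᴴ * V = 1 ∧ V * Vᴴ = P := by
  classical
  set U : Matrix n n ℂ := (hP.eigenvectorUnitary : Matrix n n ℂ) with hU
  have hU1 : Uᴴ * U = 1 := by
    rw [← Matrix.star_eq_conjTranspose]
    exact (Matrix.mem_unitaryGroup_iff').mp hP.eigenvectorUnitary.2
  have hU2 : U * Uᴴ = 1 := by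
    rw [← Matrix.star_eq_conjTranspose]
    exact (Matrix.mem_unitaryGroup_iff).mp hP.eigenvectorUnitary.2
  have hdiag : Uᴴ * P * U = Matrix.diagonal (RCLike.ofReal ∘ hP.eigenvalues) := by
    rw [← Matrix.star_eq_conjTranspose]
    rw [← hP.conjStarAlgAut_star_eigenvectorUnitary, Unitary.conjStarAlgAut_star_apply]
  -- eigenvalues are 0 or 1
  have hev : ∀ i, hP.eigenvalues i = 0 ∨ hP.eigenvalues i = 1 := by
    intro i
    have hDD : (Matrix.diagonal (RCLike.ofReal ∘ hP.eigenvalues) : Matrix n n ℂ) *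
        Matrix.diagonal (RCLike.ofReal ∘ hP.eigenvalues) =
        Matrix.diagonal (RCLike.ofReal ∘ hP.eigenvalues) := by
      rw [← hdiag]
      calc Uᴴ * P * U * (Uᴴ * P * U) = Uᴴ * (P * (U * Uᴴ) * P) * U := by
            simp only [Matrix.mul_assoc]
          _ = Uᴴ * P * U := by rw [hU2, Matrix.mul_one, hidem, Matrix.mul_assoc]
    have := congrFun (congrFun hDD i) i
    simp only [Matrix.diagonal_mul_diagonal, Matrix.diagonal_apply_eq, Function.comp_apply] at this
    have h2 : (hP.eigenvalues i : ℂ) * (hP.eigenvalues i : ℂ) = (hP.eigenvalues i : ℂ) := this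
    have h3 : hP.eigenvalues i * hP.eigenvalues i = hP.eigenvalues i := by
      exact_mod_cast h2
    have h4 : hP.eigenvalues i * (hP.eigenvalues i - 1) = 0 := by ring_nf; linarith [h3]
    rcases mul_eq_zero.mp h4 with h | h
    · left; exact h
    · right; linarith
  have e : Fin P.rank ≃ {i // hP.eigenvalues i ≠ 0} :=
    (Fintype.equivFinOfCardEq hP.rank_eq_card_non_zero_eigs.symm).symm
  refine ⟨Matrix.of fun a j => U a (e j), ?_, ?_⟩
  · ext j j'
    have h1 := congrFun (congrFun hU1 ((e j) : n)) ((e j') : n)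
    simp only [Matrix.mul_apply, Matrix.conjTranspose_apply, Matrix.of_apply] at h1 ⊢
    rw [h1]
    by_cases hjj : j = j'
    · subst hjj; simp
    · have hne : ((e j) : n) ≠ ((e j') : n) := by
        intro hcontra
        exact hjj (e.injective (Subtype.ext hcontra))
      rw [Matrix.one_apply_ne hne, Matrix.one_apply_ne hjj]
  · have hPspec : P = U * Matrix.diagonal (RCLike.ofReal ∘ hP.eigenvalues) * Uᴴ := by
      conv_lhs => rw [hP.spectral_theorem]
      rw [Unitary.conjStarAlgAut_apply, Matrix.star_eq_conjTranspose]
    ext a b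
    set g : n → ℂ := fun i => (hP.eigenvalues i : ℂ) * (U a i * (starRingEnd ℂ) (U b i)) with hg
    have hent : P a b = ∑ i, g i := by
      rw [hPspec]
      simp only [Matrix.mul_apply, Matrix.conjTranspose_apply, Matrix.diagonal_apply, hg,
        Function.comp_apply, mul_ite, mul_zero, Finset.sum_ite_eq', Finset.mem_univ, if_true]
      refine Finset.sum_congr rfl (fun i _ => ?_)
      have : (RCLike.ofReal (hP.eigenvalues i) : ℂ) = (hP.eigenvalues i : ℂ) := rfl
      rw [starRingEnd_apply, mul_right_comm, mul_comm, this]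
    have hlhs : (Matrix.of (fun a j => U a (e j)) * (Matrix.of fun a j => U a (e j))ᴴ) a b
        = ∑ j : Fin P.rank, g ((e j : n)) := by
      simp only [Matrix.mul_apply, Matrix.conjTranspose_apply, Matrix.of_apply]
      refine Finset.sum_congr rfl (fun j _ => ?_)
      have h1 : hP.eigenvalues (e j) = 1 := by
        rcases hev (e j) with h | h
        · exact absurd h (e j).2
        · exact h
      simp [hg, h1]
    rw [hlhs, hent]
    rw [e.sum_comp (fun i : {i // hP.eigenvalues i ≠ 0} => g (i : n))]
    rw [← Finset.sum_subtype (Finset.filter (fun i => hP.eigenvalues i ≠ 0) Finset.univ)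
      (fun i => by simp) g]
    rw [Finset.sum_filter_of_ne (fun i _ hgi => ?_)]
    intro hzero
    apply hgi
    simp [hg, hzero]

end auxLemmas

/-- For an operator space `S ⊆ L(A)` with `I ∈ S`, the largest rank of a projector `P`
with `P S P = ℂ·P` equals the largest `n` such that `Q_n` is homomorphic to `S^⊥` via a
CPTP map. -/
theorem qIndep_eq_Qhom {α : Type*} [Fintype α] [DecidableEq α]
    (S : Submodule ℂ (Matrix α α ℂ)) (hI : (1 : Matrix α α ℂ) ∈ S) :
    sSup {r : ℕ | ∃ P : Matrix α α ℂ, P.IsHermitian ∧ P * P = P ∧ P.rank = r ∧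
        ∀ s ∈ S, ∃ c : ℂ, P * s * P = c • P} =
    sSup {k : ℕ | OpHom (Qgraph k) (hsOrtho S)} := by
  have hQmem : ∀ {d : ℕ} (q : Matrix (Fin d) (Fin d) ℂ), q ∈ Qgraph d ↔ q.trace = 0 := by
    intro d q
    simp [Qgraph, LinearMap.mem_ker, Matrix.traceLinearMap]
  have hOmem : ∀ (X : Matrix α α ℂ), (∀ t ∈ S, (tᴴ * X).trace = 0) → X ∈ hsOrtho S :=
    fun X h => h
  have hOmem' : ∀ (X : Matrix α α ℂ), X ∈ hsOrtho S → (∀ t ∈ S, (tᴴ * X).trace = 0) :=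
    fun X h => h
  have hsets : {r : ℕ | ∃ P : Matrix α α ℂ, P.IsHermitian ∧ P * P = P ∧ P.rank = r ∧
      ∀ s ∈ S, ∃ c : ℂ, P * s * P = c • P} = {k : ℕ | OpHom (Qgraph k) (hsOrtho S)} := by
    ext r
    simp only [Set.mem_setOf_eq]
    constructor
    · rintro ⟨P, hherm, hidem, hrank, hscal⟩
      subst hrank
      obtain ⟨V, hV1, hV2⟩ := exists_isometry hherm hidem
      refine ⟨1, fun _ => V, by simpa using hV1, ?_⟩
      intro i j q hq
      apply hOmem
      intro s hs
      obtain ⟨c, hc⟩ := hscal s hs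
      have hVsV : Vᴴ * s * V = c • 1 := by
        calc Vᴴ * s * V = (Vᴴ * V) * (Vᴴ * s * V) * (Vᴴ * V) := by rw [hV1]; simp
          _ = Vᴴ * (V * Vᴴ * s * (V * Vᴴ)) * V := by simp only [Matrix.mul_assoc]
          _ = Vᴴ * (P * s * P) * V := by rw [hV2]
          _ = Vᴴ * (c • P) * V := by rw [hc]
          _ = c • (Vᴴ * P * V) := by rw [Matrix.mul_smul, Matrix.smul_mul]
          _ = c • 1 := by
              have hVPV : Vᴴ * P * V = 1 := by
                calc Vᴴ * P * V = Vᴴ * (V * Vᴴ) * V := by rw [hV2]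
                  _ = (Vᴴ * V) * (Vᴴ * V) := by simp only [Matrix.mul_assoc]
                  _ = 1 := by rw [hV1, one_mul]
              rw [hVPV]
      have hstar : Vᴴ * sᴴ * V = (starRingEnd ℂ) c • 1 := by
        have h2 := congrArg Matrix.conjTranspose hVsV
        simpa [Matrix.conjTranspose_mul, Matrix.mul_assoc, Matrix.conjTranspose_smul] using h2
      have hq0 : q.trace = 0 := (hQmem q).mp hq
      have e1 : sᴴ * (V * q * Vᴴ) = (sᴴ * V * q) * Vᴴ := by simp only [Matrix.mul_assoc]
      rw [e1, Matrix.trace_mul_comm]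
      have e2 : Vᴴ * (sᴴ * V * q) = (Vᴴ * sᴴ * V) * q := by simp only [Matrix.mul_assoc]
      rw [e2, hstar, Matrix.smul_mul, one_mul, Matrix.trace_smul, hq0, smul_zero]
    · rintro ⟨m, E, hsum, hE⟩
      rcases Nat.eq_zero_or_pos r with rfl | hr
      · exact ⟨0, Matrix.isHermitian_zero, by simp, by simp [Matrix.rank_zero],
          fun s hs => ⟨0, by simp⟩⟩
      · have : NeZero r := ⟨hr.ne'⟩
        have hscalar : ∀ s ∈ S, ∀ i j, ∃ c : ℂ, (E j)ᴴ * sᴴ * E i = c • 1 := by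
          intro s hs i j
          apply scalar_of_forall_traceless
          intro q hq0
          have hmem := hOmem' _ (hE i j q ((hQmem q).mpr hq0)) s hs
          have e1 : sᴴ * (E i * q * (E j)ᴴ) = (sᴴ * E i * q) * (E j)ᴴ := by
            simp only [Matrix.mul_assoc]
          rw [e1, Matrix.trace_mul_comm] at hmem
          have e2 : (E j)ᴴ * (sᴴ * E i * q) = ((E j)ᴴ * sᴴ * E i) * q := by
            simp only [Matrix.mul_assoc]
          rw [e2] at hmem
          exact hmem
        have h1 : ∀ i, ∃ c : ℂ, (E i)ᴴ * E i = c • 1 := by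
          intro i
          obtain ⟨c, hc⟩ := hscalar 1 hI i i
          refine ⟨c, ?_⟩
          simpa using hc
        choose cs hcs using h1
        have hsumc : (∑ i, cs i) = 1 := by
          have hsum0 : ∑ i, cs i • (1 : Matrix (Fin r) (Fin r) ℂ) = 1 := by
            calc ∑ i, cs i • (1 : Matrix (Fin r) (Fin r) ℂ) = ∑ i, (E i)ᴴ * E i :=
                  Finset.sum_congr rfl fun i _ => (hcs i).symm
              _ = 1 := hsum
          have hsum1 : (∑ i, cs i) • (1 : Matrix (Fin r) (Fin r) ℂ) = 1 := by
            rw [Finset.sum_smul]; exact hsum0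
          have := congrFun (congrFun hsum1 0) 0
          simpa [Matrix.smul_apply, Matrix.one_apply] using this
        have hex : ∃ i, cs i ≠ 0 := by
          by_contra hall
          push_neg at hall
          simp [hall] at hsumc
        obtain ⟨i0, hi0⟩ := hex
        -- cs i0 is a positive real
        set t : ℝ := ∑ a, Complex.normSq (E i0 a 0) with ht
        have hct : cs i0 = (t : ℂ) := by
          have h2 := congrFun (congrFun (hcs i0) 0) 0
          simp only [Matrix.smul_apply, Matrix.one_apply_eq, smul_eq_mul, mul_one] at h2
          rw [← h2]
          simp only [Matrix.mul_apply, Matrix.conjTranspose_apply, ht, Complex.ofReal_sum]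
          refine Finset.sum_congr rfl fun a _ => ?_
          rw [Complex.normSq_eq_conj_mul_self, starRingEnd_apply]
        have htne : t ≠ 0 := by
          intro h0
          apply hi0
          rw [hct, h0]
          simp
        have hge : (0:ℝ) ≤ t := by
          rw [ht]
          exact Finset.sum_nonneg fun a _ => Complex.normSq_nonneg (E i0 a 0)
        have ht0 : 0 < t := lt_of_le_of_ne hge (Ne.symm htne)
        set u : ℝ := Real.sqrt t with hu
        have hu0 : 0 < u := Real.sqrt_pos.mpr ht0
        have hu2 : u * u = t := Real.mul_self_sqrt ht0.le
        have hkey : ((u⁻¹ : ℝ) : ℂ) * ((u⁻¹ : ℝ) : ℂ) * (t : ℂ) = 1 := by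
          rw [← Complex.ofReal_mul, ← Complex.ofReal_mul, ← Complex.ofReal_one]
          congr 1
          field_simp
          rw [sq]; exact hu2.symm
        set W' : Matrix α (Fin r) ℂ := ((u⁻¹ : ℝ) : ℂ) • E i0 with hW'
        have hW'H : W'ᴴ = ((u⁻¹ : ℝ) : ℂ) • (E i0)ᴴ := by
          rw [hW', Matrix.conjTranspose_smul]
          congr 1
          rw [← starRingEnd_apply, Complex.conj_ofReal]
        have hiso : W'ᴴ * W' = 1 := by
          rw [hW'H, hW', Matrix.smul_mul, Matrix.mul_smul, hcs i0, hct, smul_smul, smul_smul,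
            hkey, one_smul]
        refine ⟨W' * W'ᴴ, Matrix.isHermitian_mul_conjTranspose_self W', ?_, ?_, ?_⟩
        · calc W' * W'ᴴ * (W' * W'ᴴ) = W' * (W'ᴴ * W') * W'ᴴ := by simp only [Matrix.mul_assoc]
            _ = W' * (1 : Matrix (Fin r) (Fin r) ℂ) * W'ᴴ := by rw [hiso]
            _ = W' * W'ᴴ := by rw [Matrix.mul_one]
        · rw [Matrix.rank_self_mul_conjTranspose]
          have h3 : (W'ᴴ * W').rank = W'.rank := Matrix.rank_conjTranspose_mul_self W'
          rw [← h3, hiso, Matrix.rank_one, Fintype.card_fin]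
        · intro s hs
          obtain ⟨d, hd⟩ := hscalar s hs i0 i0
          have hd' : (E i0)ᴴ * s * E i0 = (starRingEnd ℂ) d • 1 := by
            have h2 := congrArg Matrix.conjTranspose hd
            simpa [Matrix.conjTranspose_mul, Matrix.mul_assoc, Matrix.conjTranspose_smul] using h2
          have hWsW : W'ᴴ * s * W' = (((u⁻¹ : ℝ) : ℂ) * ((u⁻¹ : ℝ) : ℂ) * (starRingEnd ℂ) d) •
              (1 : Matrix (Fin r) (Fin r) ℂ) := by
            rw [hW'H, hW', Matrix.smul_mul, Matrix.smul_mul, Matrix.mul_smul, hd',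
              smul_smul, smul_smul]
          refine ⟨((u⁻¹ : ℝ) : ℂ) * ((u⁻¹ : ℝ) : ℂ) * (starRingEnd ℂ) d, ?_⟩
          calc W' * W'ᴴ * s * (W' * W'ᴴ) = W' * (W'ᴴ * s * W') * W'ᴴ := by
                simp only [Matrix.mul_assoc]
            _ = W' * ((((u⁻¹ : ℝ) : ℂ) * ((u⁻¹ : ℝ) : ℂ) * (starRingEnd ℂ) d) •
                (1 : Matrix (Fin r) (Fin r) ℂ)) * W'ᴴ := by rw [hWsW]
            _ = (((u⁻¹ : ℝ) : ℂ) * ((u⁻¹ : ℝ) : ℂ) * (starRingEnd ℂ) d) • (W' * W'ᴴ) := by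
                rw [Matrix.mul_smul, Matrix.mul_one, Matrix.smul_mul]
  exact congrArg sSup hsets
end
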